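/- Let b, b* ∈ ℝ³ be unit vectors, x ∈ ℝ with x ≠ 0, x* ∈ ℝ, and k₁, k₂ > 0. Set δ₁ = b − b*, δ₂ = x − x*, and define the desired scaled relative velocity w_d = (k₁/x)·Π_b b* + (k₂/x²)·δ₂·b. Then ⟨x·Π_b δ₁ − x²·δ₂·b, w_d⟩ = −k₁·⟨δ₁, Π_b δ₁⟩ − k₂·δ₂² ≤ 0, where Π_b x := x − ⟨b,x⟩b. -/
import Mathlib


open scoped RealInnerProductSpace

/-- Orthogonal projection onto the plane orthogonal to the unit vector `b`. -/
noncomputable def proj (b v : EuclideanSpace ℝ (Fin 3)) : EuclideanSpace ℝ (Fin 3) :=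
  v - ⟪b, v⟫ • b

theorem desired_velocity_dissipation
    (b bstar : EuclideanSpace ℝ (Fin 3))
    (hb : ‖b‖ = 1) (hbstar : ‖bstar‖ = 1)
    (x xstar k₁ k₂ : ℝ) (hx : x ≠ 0) (hk₁ : 0 < k₁) (hk₂ : 0 < k₂)
    (δ₁ : EuclideanSpace ℝ (Fin 3)) (hδ₁ : δ₁ = b - bstar)
    (δ₂ : ℝ) (hδ₂ : δ₂ = x - xstar)
    (w_d : EuclideanSpace ℝ (Fin 3))
    (hw_d : w_d = (k₁ / x) • proj b bstar + (k₂ / x ^ 2 * δ₂) • b) :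
    ⟪x • proj b δ₁ - (x ^ 2 * δ₂) • b, w_d⟫ = -(k₁ * ⟪δ₁, proj b δ₁⟫) - k₂ * δ₂ ^ 2 ∧
    ⟪x • proj b δ₁ - (x ^ 2 * δ₂) • b, w_d⟫ ≤ 0 := by
  have hbb : ⟪b, b⟫ = 1 := by
    rw [real_inner_self_eq_norm_sq, hb]; norm_num
  have hbsbs : ⟪bstar, bstar⟫ = 1 := by
    rw [real_inner_self_eq_norm_sq, hbstar]; norm_num
  have hsym : ⟪bstar, b⟫ = ⟪b, bstar⟫ := real_inner_comm _ _
  have hx2 : x ^ 2 ≠ 0 := pow_ne_zero 2 hx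
  have key : ⟪x • proj b δ₁ - (x ^ 2 * δ₂) • b, w_d⟫
      = -(k₁ * ⟪δ₁, proj b δ₁⟫) - k₂ * δ₂ ^ 2 := by
    subst hδ₁ hw_d
    simp only [proj, inner_sub_left, inner_sub_right, inner_add_right,
      real_inner_smul_left, real_inner_smul_right, hbb, hbsbs, hsym]
    field_simp
    ring
  refine ⟨key, key ▸ ?_⟩
  have h1 : ⟪δ₁, proj b δ₁⟫ = ‖proj b δ₁‖ ^ 2 := by
    have hbp : ⟪b, proj b δ₁⟫ = 0 := by
      rw [proj, inner_sub_right, real_inner_smul_right, hbb]; ring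
    have hd : δ₁ = proj b δ₁ + ⟪b, δ₁⟫ • b := by simp [proj]
    have h2 : ⟪δ₁, proj b δ₁⟫ = ⟪proj b δ₁ + ⟪b, δ₁⟫ • b, proj b δ₁⟫ := by rw [← hd]
    rw [h2, inner_add_left, real_inner_smul_left, hbp, real_inner_self_eq_norm_sq]; ring
  rw [h1]
  nlinarith [mul_nonneg hk₁.le (sq_nonneg ‖proj b δ₁‖), mul_nonneg hk₂.le (sq_nonneg δ₂)]
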